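/- arXiv:2503.06000 — 2 statements merged into one kernel-verified Lean document; each statement's English description precedes it below -/
import Mathlib

section
/- Let ℓ^i = N_{p,r}(x^i,d^i,l^i,u^i) and ℓ^j = N_{p,r}(x^j,d^j,l^j,u^j) be two finite needles, p ≥ 1, r > 0, and ε > 0. Suppose there exist v^0 in R^3 and nonnegative scalars v^1,...,v^6 satisfying: (x^i - x^j)·v^0 - l^i v^1 + u^i v^2 - l^j v^4 + u^j v^5 + r v^3 + r v^6 ≤ -ε; -(d^i)·v^0 - v^1 + v^2 = 0; (d^j)·v^0 - v^4 + v^5 = 0; ||v^0||_q ≤ v^3 and ||v^0||_q ≤ v^6 (where 1/p + 1/q = 1). Then ℓ^i ∩ ℓ^j = ∅. -/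
open scoped ENNReal

/-- The `p`-norm of a vector in ℝ³, with `p = ∞` allowed. -/
noncomputable def pnorm (p : ℝ≥0∞) (v : Fin 3 → ℝ) : ℝ :=
  if p = ⊤ then max (max |v 0| |v 1|) |v 2|
  else (∑ i, |v i| ^ p.toReal) ^ (1 / p.toReal)

/-- The needle `N_{p,r}(x,d,l,u)`. -/
def needle (p : ℝ≥0∞) (r : ℝ) (x d : Fin 3 → ℝ) (l u : ℝ) : Set (Fin 3 → ℝ) :=
  {χ | ∃ τ ρ, l ≤ τ ∧ τ ≤ u ∧ pnorm p ρ ≤ r ∧ χ = x + τ • d + ρ}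

/-- Euclidean inner product on ℝ³. -/
def dot (v w : Fin 3 → ℝ) : ℝ :=
  ∑ i, v i * w i

lemma pnorm_nonneg (p : ℝ≥0∞) (v : Fin 3 → ℝ) : 0 ≤ pnorm p v := by
  unfold pnorm
  split
  · positivity
  · apply Real.rpow_nonneg
    positivity

lemma pnorm_neg (p : ℝ≥0∞) (v : Fin 3 → ℝ) : pnorm p (fun i => -v i) = pnorm p v := by
  unfold pnorm
  simp [abs_neg]

lemma pnorm_one (v : Fin 3 → ℝ) : pnorm 1 v = |v 0| + |v 1| + |v 2| := by
  unfold pnorm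
  simp [Fin.sum_univ_three]

/-- Hölder's inequality for `dot` and `pnorm`. -/
lemma dot_le_pnorm_mul_pnorm (p q : ℝ≥0∞) (hp : 1 ≤ p) (hq : 1 ≤ q)
    (hpq : 1 / p + 1 / q = 1) (a b : Fin 3 → ℝ) :
    dot a b ≤ pnorm p a * pnorm q b := by
  have habs : ∀ (x y : Fin 3 → ℝ), dot x y ≤ ∑ i, |x i| * |y i| := by
    intro x y
    refine Finset.sum_le_sum fun i _ => ?_
    calc x i * y i ≤ |x i * y i| := le_abs_self _
    _ = |x i| * |y i| := abs_mul _ _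
  by_cases hpt : p = ⊤
  · -- then q = 1
    have hq1 : q = 1 := by
      rw [hpt] at hpq
      simpa using hpq
    subst hq1
    rw [hpt, pnorm_one]
    unfold pnorm
    simp only [if_pos]
    calc dot a b ≤ ∑ i, |a i| * |b i| := habs a b
    _ ≤ max (max |a 0| |a 1|) |a 2| * (|b 0| + |b 1| + |b 2|) := by
        rw [Fin.sum_univ_three]
        have h0 : |a 0| ≤ max (max |a 0| |a 1|) |a 2| := le_max_of_le_left (le_max_left _ _)
        have h1 : |a 1| ≤ max (max |a 0| |a 1|) |a 2| := le_max_of_le_left (le_max_right _ _)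
        have h2 : |a 2| ≤ max (max |a 0| |a 1|) |a 2| := le_max_right _ _
        nlinarith [abs_nonneg (b 0), abs_nonneg (b 1), abs_nonneg (b 2)]
  by_cases hqt : q = ⊤
  · -- then p = 1
    have hp1 : p = 1 := by
      rw [hqt] at hpq
      simpa using hpq
    subst hp1
    rw [pnorm_one, hqt]
    unfold pnorm
    simp only [if_pos]
    calc dot a b ≤ ∑ i, |a i| * |b i| := habs a b
    _ ≤ (|a 0| + |a 1| + |a 2|) * max (max |b 0| |b 1|) |b 2| := by
        rw [Fin.sum_univ_three]
        have h0 : |b 0| ≤ max (max |b 0| |b 1|) |b 2| := le_max_of_le_left (le_max_left _ _)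
        have h1 : |b 1| ≤ max (max |b 0| |b 1|) |b 2| := le_max_of_le_left (le_max_right _ _)
        have h2 : |b 2| ≤ max (max |b 0| |b 1|) |b 2| := le_max_right _ _
        nlinarith [abs_nonneg (a 0), abs_nonneg (a 1), abs_nonneg (a 2)]
  · -- finite conjugate exponents
    have hp0 : p ≠ 0 := by positivity
    have hq0 : q ≠ 0 := by positivity
    have hp1 : (1:ℝ) ≤ p.toReal := by
      rw [show (1:ℝ) = (1:ℝ≥0∞).toReal by simp]
      exact ENNReal.toReal_mono hpt hp
    have hq1 : (1:ℝ) ≤ q.toReal := by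
      rw [show (1:ℝ) = (1:ℝ≥0∞).toReal by simp]
      exact ENNReal.toReal_mono hqt hq
    have hsum : 1 / p.toReal + 1 / q.toReal = 1 := by
      have := congrArg ENNReal.toReal hpq
      rw [ENNReal.toReal_add (by simp [ENNReal.div_eq_top, hp0])
        (by simp [ENNReal.div_eq_top, hq0])] at this
      simpa [ENNReal.toReal_div] using this
    have hplt : 1 < p.toReal := by
      rcases lt_or_eq_of_le hp1 with h | h
      · exact h
      · exfalso
        rw [← h] at hsum
        have : 1 / q.toReal = 0 := by linarith
        have hqpos : 0 < q.toReal := by linarith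
        rw [div_eq_zero_iff] at this
        rcases this with h' | h' <;> [exact one_ne_zero h'; linarith]
    have hconj : Real.HolderConjugate p.toReal q.toReal :=
      Real.holderConjugate_iff.mpr ⟨hplt, by rw [← one_div, ← one_div]; exact hsum⟩
    unfold pnorm
    rw [if_neg hpt, if_neg hqt]
    exact Real.inner_le_Lp_mul_Lq Finset.univ a b hconj

theorem finite_needles_disjoint (p q : ℝ≥0∞) (hp : 1 ≤ p) (hq : 1 ≤ q)
    (hpq : 1 / p + 1 / q = 1) (r : ℝ) (hr : 0 < r) (ε : ℝ) (hε : 0 < ε)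
    (xi di xj dj : Fin 3 → ℝ) (li ui lj uj : ℝ) (hi : li ≤ ui) (hj : lj ≤ uj)
    (v0 : Fin 3 → ℝ) (v1 v2 v3 v4 v5 v6 : ℝ)
    (hv1 : 0 ≤ v1) (hv2 : 0 ≤ v2) (hv3 : 0 ≤ v3)
    (hv4 : 0 ≤ v4) (hv5 : 0 ≤ v5) (hv6 : 0 ≤ v6)
    (hineq : dot (xi - xj) v0 - li * v1 + ui * v2 - lj * v4 + uj * v5
        + r * v3 + r * v6 ≤ -ε)
    (heqi : -dot di v0 - v1 + v2 = 0)
    (heqj : dot dj v0 - v4 + v5 = 0)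
    (hcone3 : pnorm q v0 ≤ v3) (hcone6 : pnorm q v0 ≤ v6) :
    needle p r xi di li ui ∩ needle p r xj dj lj uj = ∅ := by
  rw [Set.eq_empty_iff_forall_notMem]
  rintro χ ⟨⟨τi, ρi, hliτ, hτui, hρi, hχi⟩, ⟨τj, ρj, hljτ, hτuj, hρj, hχj⟩⟩
  have hcoord : ∀ k, xi k - xj k = τj * dj k - τi * di k + ρj k - ρi k := by
    intro k
    have := congrFun (hχi ▸ hχj) k
    simp only [Pi.add_apply, Pi.smul_apply, smul_eq_mul] at this
    linarith
  have key : dot (xi - xj) v0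
      = τj * dot dj v0 - τi * dot di v0 + dot ρj v0 - dot ρi v0 := by
    simp only [dot, Fin.sum_univ_three, Pi.sub_apply]
    rw [hcoord 0, hcoord 1, hcoord 2]; ring
  -- Hölder bounds
  have hbi : dot ρi v0 ≤ r * v3 := by
    calc dot ρi v0 ≤ pnorm p ρi * pnorm q v0 := dot_le_pnorm_mul_pnorm p q hp hq hpq ρi v0
    _ ≤ r * v3 := mul_le_mul hρi hcone3 (pnorm_nonneg _ _) hr.le
  have hbj : -dot ρj v0 ≤ r * v6 := by
    have h1 : dot (fun k => -ρj k) v0 = -dot ρj v0 := by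
      simp [dot, Fin.sum_univ_three]
    calc -dot ρj v0 = dot (fun k => -ρj k) v0 := h1.symm
    _ ≤ pnorm p (fun k => -ρj k) * pnorm q v0 :=
        dot_le_pnorm_mul_pnorm p q hp hq hpq _ v0
    _ = pnorm p ρj * pnorm q v0 := by rw [pnorm_neg]
    _ ≤ r * v6 := mul_le_mul hρj hcone6 (pnorm_nonneg _ _) hr.le
  have e1 : dot di v0 = v2 - v1 := by linarith
  have e2 : dot dj v0 = v4 - v5 := by linarith
  rw [e1, e2] at key
  rw [key] at hineq
  nlinarith [mul_nonneg hv1 (sub_nonneg.2 hliτ), mul_nonneg hv2 (sub_nonneg.2 hτui),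
    mul_nonneg hv4 (sub_nonneg.2 hljτ), mul_nonneg hv5 (sub_nonneg.2 hτuj)]
end

section
/- Let ℓ^i and ℓ^j be two infinite needles with parameters (x^i,d^i) and (x^j,d^j), p ≥ 1, r > 0, and ε > 0. Suppose there exist v^0 in R^3 and nonnegative scalars v^3, v^6 with: (x^i - x^j)·v^0 + r v^3 + r v^6 ≤ -ε; (d^i)·v^0 = 0; (d^j)·v^0 = 0; ||v^0||_q ≤ v^3; ||v^0||_q ≤ v^6, where 1/p + 1/q = 1. Then the infinite needles do not intersect: { x^i + τ d^i + ρ : τ in R, ||ρ||_p ≤ r } ∩ { x^j + τ d^j + ρ : τ in R, ||ρ||_p ≤ r } = ∅. -/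
open scoped ENNReal

/-- The infinite needle with reference point `x`, direction `d`, radius `r`, norm order `p`. -/
def infNeedle (p : ℝ≥0∞) (r : ℝ) (x d : Fin 3 → ℝ) : Set (Fin 3 → ℝ) :=
  {χ | ∃ τ : ℝ, ∃ ρ, pnorm p ρ ≤ r ∧ χ = x + τ • d + ρ}

lemma holder_top_one (a b : Fin 3 → ℝ) : |dot a b| ≤ pnorm ⊤ a * pnorm 1 b := by
  have ht : (1 : ℝ≥0∞) ≠ ⊤ := by simp
  simp only [pnorm, if_pos rfl, if_neg ht, ENNReal.toReal_one, Real.rpow_one,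
    dot, Fin.sum_univ_three]
  norm_num
  set M := max (max |a 0| |a 1|) |a 2| with hM
  have hM0 : |a 0| ≤ M := le_trans (le_max_left _ _) (le_max_left _ _)
  have hM1 : |a 1| ≤ M := le_trans (le_max_right _ _) (le_max_left _ _)
  have hM2 : |a 2| ≤ M := le_max_right _ _
  have h0 : |a 0 * b 0| ≤ M * |b 0| := by
    rw [abs_mul]; exact mul_le_mul_of_nonneg_right hM0 (abs_nonneg _)
  have h1 : |a 1 * b 1| ≤ M * |b 1| := by
    rw [abs_mul]; exact mul_le_mul_of_nonneg_right hM1 (abs_nonneg _)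
  have h2 : |a 2 * b 2| ≤ M * |b 2| := by
    rw [abs_mul]; exact mul_le_mul_of_nonneg_right hM2 (abs_nonneg _)
  have habs : |a 0 * b 0 + a 1 * b 1 + a 2 * b 2| ≤
      |a 0 * b 0| + |a 1 * b 1| + |a 2 * b 2| := by
    calc |a 0 * b 0 + a 1 * b 1 + a 2 * b 2| ≤ |a 0 * b 0 + a 1 * b 1| + |a 2 * b 2| :=
          abs_add_le _ _
      _ ≤ |a 0 * b 0| + |a 1 * b 1| + |a 2 * b 2| := by
          have := abs_add_le (a 0 * b 0) (a 1 * b 1); linarith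
  nlinarith [habs]

lemma dot_comm (a b : Fin 3 → ℝ) : dot a b = dot b a := by
  simp [dot, mul_comm]

lemma holder_aux (p q : ℝ≥0∞) (hp : 1 ≤ p) (hq : 1 ≤ q)
    (hpq : 1 / p + 1 / q = 1) (a b : Fin 3 → ℝ) :
    |dot a b| ≤ pnorm p a * pnorm q b := by
  by_cases hpt : p = ⊤
  · by_cases hqt : q = ⊤
    · exfalso
      rw [hpt, hqt] at hpq
      simp at hpq
    · have h1 : 1 / q = 1 := by
        rw [hpt] at hpq
        simpa using hpq
      have : q = 1 := by
        rwa [one_div, ENNReal.inv_eq_one] at h1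
      rw [hpt, this]
      exact holder_top_one a b
  · by_cases hqt : q = ⊤
    · have h1 : 1 / p = 1 := by
        rw [hqt] at hpq
        simpa using hpq
      have : p = 1 := by
        rwa [one_div, ENNReal.inv_eq_one] at h1
      rw [hqt, this, dot_comm, mul_comm]
      exact holder_top_one b a
    · -- both finite
      set P := p.toReal with hP
      set Q := q.toReal with hQ
      have hp0 : p ≠ 0 := by intro h; rw [h] at hp; simp at hp
      have hq0 : q ≠ 0 := by intro h; rw [h] at hq; simp at hq
      have hP1 : 1 ≤ P := by
        rw [hP, ← ENNReal.toReal_one]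
        exact ENNReal.toReal_mono hpt hp
      have hQ1 : 1 ≤ Q := by
        rw [hQ, ← ENNReal.toReal_one]
        exact ENNReal.toReal_mono hqt hq
      have hreal : 1 / P + 1 / Q = 1 := by
        have h1 : 1 / p ≠ ⊤ := by
          simp [ENNReal.div_eq_top, hp0]
        have h2 : 1 / q ≠ ⊤ := by
          simp [ENNReal.div_eq_top, hq0]
        have := congrArg ENNReal.toReal hpq
        rwa [ENNReal.toReal_add h1 h2, ENNReal.toReal_div, ENNReal.toReal_div,
          ENNReal.toReal_one] at this
      have hQpos : 0 < Q := lt_of_lt_of_le one_pos hQ1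
      have hPlt : 1 < P := by
        have hq' : 0 < 1 / Q := by positivity
        have hp' : 1 / P < 1 := by linarith
        have hPpos : 0 < P := lt_of_lt_of_le one_pos hP1
        rwa [div_lt_one hPpos] at hp'
      have hconj : Real.HolderConjugate P Q := Real.holderConjugate_iff.mpr ⟨hPlt, by
        rw [← one_div, ← one_div]; exact hreal⟩
      have key := Real.inner_le_Lp_mul_Lq Finset.univ (fun i => |a i|) (fun i => |b i|) hconj
      simp only [abs_abs] at key
      simp only [pnorm, if_neg hpt, if_neg hqt, ← hP, ← hQ]
      calc |dot a b| ≤ ∑ i, |a i * b i| := Finset.abs_sum_le_sum_abs _ _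
        _ = ∑ i : Fin 3, |a i| * |b i| := by simp [abs_mul]
        _ ≤ _ := key

theorem infinite_needles_disjoint (p q : ℝ≥0∞) (hp : 1 ≤ p) (hq : 1 ≤ q)
    (hpq : 1 / p + 1 / q = 1) (r : ℝ) (hr : 0 < r) (ε : ℝ) (hε : 0 < ε)
    (xi di xj dj : Fin 3 → ℝ) (v0 : Fin 3 → ℝ) (v3 v6 : ℝ)
    (hv3 : 0 ≤ v3) (hv6 : 0 ≤ v6)
    (hineq : dot (xi - xj) v0 + r * v3 + r * v6 ≤ -ε)
    (heqi : dot di v0 = 0) (heqj : dot dj v0 = 0)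
    (hcone3 : pnorm q v0 ≤ v3) (hcone6 : pnorm q v0 ≤ v6) :
    infNeedle p r xi di ∩ infNeedle p r xj dj = ∅ := by
  ext χ
  simp only [Set.mem_inter_iff, Set.mem_empty_iff_false, iff_false, not_and]
  rintro ⟨τi, ρi, hρi, rfl⟩ ⟨τj, ρj, hρj, hχ⟩
  have h0 := congrFun hχ 0
  have h1 := congrFun hχ 1
  have h2 := congrFun hχ 2
  simp only [Pi.add_apply, Pi.smul_apply, smul_eq_mul] at h0 h1 h2
  have key : dot (xi - xj) v0 = dot ρj v0 - dot ρi v0 := by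
    simp only [dot, Fin.sum_univ_three, Pi.sub_apply] at heqi heqj ⊢
    linear_combination v0 0 * h0 + v0 1 * h1 + v0 2 * h2 + τj * heqj - τi * heqi
  have hni : |dot ρi v0| ≤ r * v3 :=
    le_trans (holder_aux p q hp hq hpq ρi v0)
      (mul_le_mul hρi hcone3 (pnorm_nonneg _ _) hr.le)
  have hnj : |dot ρj v0| ≤ r * v6 :=
    le_trans (holder_aux p q hp hq hpq ρj v0)
      (mul_le_mul hρj hcone6 (pnorm_nonneg _ _) hr.le)
  rw [abs_le] at hni hnj
  linarith [hineq, key, hni.1, hni.2, hnj.1, hnj.2]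
end
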